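/- Let β > 0, let p ≥ 2 be an integer, k = ⌊p/2⌋, let A ∈ Skew(p), B ∈ ℝ^{p×p}, and let Φ₁, Φ₂ ∈ ℝ^{k×k} be nonnegative diagonal matrices with all diagonal entries ≤ π such that exp_m([[2βA, −Bᵀ],[B, 0]]) = blockdiag(G_p(Φ₁), G_p(Φ₂)) and exp_m((1−2β)A) = G_p(−Φ₁). Then for every real number φ ≠ 0 that occurs with multiplicity s₁ ≥ 1 among the diagonal entries of Φ₁ and with multiplicity s₂ ≥ 0 among the diagonal entries of Φ₂, there exist a principal 2s₁×2s₁ submatrix Â of A (obtained by selecting the same set of 2s₁ row and column indices) and a 2s₂×2s₁ submatrix B̂ of B (obtained by selecting 2s₂ rows and the same 2s₁ columns) such that exp_m([[2βÂ, −B̂ᵀ],[B̂, 0]]) = blockdiag(G_{2s₁}(φ·I_{s₁}), G_{2s₂}(φ·I_{s₂})) and exp_m((1−2β)Â) = G_{2s₁}(−φ·I_{s₁}). -/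

import Mathlib

open Matrix

/-- The matrix exponential of a real square matrix. -/
noncomputable def mexp {N : Type*} [Fintype N] [DecidableEq N] (M : Matrix N N ℝ) :
    Matrix N N ℝ :=
  NormedSpace.exp M

/-- `G_p(Φ)`: the `p×p` block-diagonal rotation matrix whose j-th 2×2 diagonal block is the
rotation by the j-th diagonal entry of the diagonal matrix `Φ` (represented by the vector of
its diagonal entries); if `p` is odd, an extra diagonal entry `1` is appended. -/
noncomputable def Gmat (p : ℕ) (Φ : Fin (p / 2) → ℝ) : Matrix (Fin p) (Fin p) ℝ :=
  Matrix.of fun i j =>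
    if h : i.val / 2 = j.val / 2 ∧ i.val / 2 < p / 2 then
      if i.val % 2 = 0 then
        if j.val % 2 = 0 then Real.cos (Φ ⟨i.val / 2, h.2⟩) else -Real.sin (Φ ⟨i.val / 2, h.2⟩)
      else
        if j.val % 2 = 0 then Real.sin (Φ ⟨i.val / 2, h.2⟩) else Real.cos (Φ ⟨i.val / 2, h.2⟩)
    else if i = j then 1 else 0

/-- `Ω_p(Φ, K)`: the `p×p` block-diagonal skew-symmetric matrix whose j-th 2×2 diagonal block is
`(Φ_jj + 2π K_jj) · J₂` where `J₂ = [[0,-1],[1,0]]`; if `p` is odd, an extra diagonal entry `0`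
is appended. -/
noncomputable def Omat (p : ℕ) (Φ : Fin (p / 2) → ℝ) (K : Fin (p / 2) → ℤ) :
    Matrix (Fin p) (Fin p) ℝ :=
  Matrix.of fun i j =>
    if h : i.val / 2 = j.val / 2 ∧ i.val / 2 < p / 2 then
      if i.val % 2 = 0 ∧ j.val % 2 = 1 then
        -(Φ ⟨i.val / 2, h.2⟩ + 2 * Real.pi * (K ⟨i.val / 2, h.2⟩ : ℝ))
      else if i.val % 2 = 1 ∧ j.val % 2 = 0 then
        Φ ⟨i.val / 2, h.2⟩ + 2 * Real.pi * (K ⟨i.val / 2, h.2⟩ : ℝ)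
      else 0
    else 0

section Aux

lemma sylvester2 (α β γ δ x y z w : ℝ) (hαγ : α ≠ γ)
    (h1 : x*γ - y*δ = α*x + β*z) (h2 : y*γ + x*δ = α*y + β*w)
    (h3 : z*γ - w*δ = α*z - β*x) (h4 : w*γ + z*δ = α*w - β*y) : x = 0 := by
  have hA : ((γ-α)^2+β^2+δ^2)*x = 2*β*δ*w := by linear_combination (γ-α)*h1 + δ*h2 + β*h3
  have hB : ((γ-α)^2+β^2+δ^2)*w = 2*β*δ*x := by linear_combination (γ-α)*h4 - δ*h3 - β*h2
  have hC : ((γ-α)^2+(β-δ)^2) * (((γ-α)^2+(β+δ)^2) * x) = 0 := by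
    linear_combination ((γ-α)^2+β^2+δ^2)*hA + (2*β*δ)*hB
  have hne : γ - α ≠ 0 := sub_ne_zero.mpr (Ne.symm hαγ)
  have hp1 : 0 < (γ-α)^2 := by positivity
  have hf1 : (γ-α)^2+(β-δ)^2 ≠ 0 := by nlinarith [sq_nonneg (β-δ)]
  have hf2 : (γ-α)^2+(β+δ)^2 ≠ 0 := by nlinarith [sq_nonneg (β+δ)]
  rcases mul_eq_zero.mp hC with h | h
  · exact absurd h hf1
  rcases mul_eq_zero.mp h with h | h
  · exact absurd h hf2
  · exact h

lemma cross_zero {ι : Type*} [Fintype ι] [DecidableEq ι] (M G : Matrix ι ι ℝ)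
    (σ : ι → ι) (c t : ι → ℝ)
    (hσσ : ∀ i, σ (σ i) = i) (hc : ∀ i, c (σ i) = c i) (ht : ∀ i, t (σ i) = -t i)
    (hG : ∀ i j, G i j = (if i = j then c j else 0) + (if i = σ j then -t j else 0))
    (hcomm : M * G = G * M) {i j : ι} (hij : c i ≠ c j) : M i j = 0 := by
  have htfix : ∀ k, σ k = k → t k = 0 := by
    intro k hk
    have := ht k
    rw [hk] at this
    linarith
  have hE : ∀ k l, M k l * c l - M k (σ l) * t l = c k * M k l + t k * M (σ k) l := by
    intro k l
    have h1 : (M * G) k l = M k l * c l - M k (σ l) * t l := by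
      rw [Matrix.mul_apply]
      have key : ∀ x, M k x * G x l =
          (if x = l then M k l * c l else 0) + (if x = σ l then M k (σ l) * (-t l) else 0) := by
        intro x
        by_cases hxl : x = l
        · by_cases hxσ : x = σ l
          · have hfix : σ l = l := by rw [← hxσ, hxl]
            have ht0 : t l = 0 := htfix l hfix
            rw [hG, if_pos hxl, if_pos hxσ, if_pos hxl, if_pos hxσ, hxl, hfix, ht0]
            ring
          · rw [hG, if_pos hxl, if_neg hxσ, if_pos hxl, if_neg hxσ, hxl]
            ring
        · by_cases hxσ : x = σ l
          · rw [hG, if_neg hxl, if_pos hxσ, if_neg hxl, if_pos hxσ, hxσ]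
            ring
          · rw [hG, if_neg hxl, if_neg hxσ, if_neg hxl, if_neg hxσ]
            ring
      rw [Finset.sum_congr rfl fun x _ => key x, Finset.sum_add_distrib]
      simp [Finset.sum_ite_eq']
      ring
    have h2 : (G * M) k l = c k * M k l + t k * M (σ k) l := by
      rw [Matrix.mul_apply]
      have key : ∀ x, G k x * M x l =
          (if x = k then c k * M k l else 0) + (if x = σ k then t k * M (σ k) l else 0) := by
        intro x
        have hiff : k = σ x ↔ x = σ k := by
          constructor <;> intro h
          · rw [h, hσσ]
          · rw [h, hσσ]
        by_cases hxk : x = k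
        · by_cases hxσ : x = σ k
          · have hfix : σ k = k := by rw [← hxσ, hxk]
            have ht0 : t k = 0 := htfix k hfix
            rw [hG, if_pos hxk.symm, if_pos (hiff.mpr hxσ), if_pos hxk, if_pos hxσ, hxk,
              hfix, ht0]
            ring
          · rw [hG, if_pos hxk.symm, if_neg (fun h => hxσ (hiff.mp h)), if_pos hxk,
              if_neg hxσ, hxk]
            ring
        · by_cases hxσ : x = σ k
          · rw [hG, if_neg (fun h => hxk h.symm), if_pos (hiff.mpr hxσ), if_neg hxk, if_pos hxσ,
              hxσ, ht]
            ring
          · rw [hG, if_neg (fun h => hxk h.symm), if_neg (fun h => hxσ (hiff.mp h)),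
              if_neg hxk, if_neg hxσ]
            ring
      rw [Finset.sum_congr rfl fun x _ => key x, Finset.sum_add_distrib]
      simp [Finset.sum_ite_eq']
    have h3 : (M * G) k l = (G * M) k l := by rw [hcomm]
    rw [h1, h2] at h3
    linarith [h3]
  refine sylvester2 (c i) (t i) (c j) (t j) (M i j) (M i (σ j)) (M (σ i) j) (M (σ i) (σ j))
    hij ?_ ?_ ?_ ?_
  · have := hE i j; linarith
  · have := hE i (σ j); simp only [hσσ, hc, ht] at this; linarith
  · have := hE (σ i) j; simp only [hσσ, hc, ht] at this; linarith
  · have := hE (σ i) (σ j); simp only [hσσ, hc, ht] at this; linarith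

end Aux

section ExpSub

attribute [local instance] Matrix.linftyOpNormedRing Matrix.linftyOpNormedAlgebra

lemma pow_cross_zero {ι : Type*} [Fintype ι] [DecidableEq ι] {κ : Type*}
    (M : Matrix ι ι ℝ) (r : κ → ι)
    (h1 : ∀ a j, (∀ b, r b ≠ j) → M (r a) j = 0) :
    ∀ (n : ℕ) (a : κ) (j : ι), (∀ b, r b ≠ j) → (M ^ n) (r a) j = 0 := by
  intro n
  induction n with
  | zero =>
    intro a j hj
    have : r a ≠ j := hj a
    simp [Matrix.one_apply, this]
  | succ n ih =>
    intro a j hj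
    rw [pow_succ, Matrix.mul_apply]
    refine Finset.sum_eq_zero fun x _ => ?_
    by_cases hx : ∃ b, r b = x
    · obtain ⟨b, rfl⟩ := hx
      rw [h1 b j hj, mul_zero]
    · push_neg at hx
      rw [ih a x hx, zero_mul]

lemma pow_submatrix {ι : Type*} [Fintype ι] [DecidableEq ι] {κ : Type*} [Fintype κ]
    [DecidableEq κ] (M : Matrix ι ι ℝ) (r : κ → ι) (hr : Function.Injective r)
    (h1 : ∀ a j, (∀ b, r b ≠ j) → M (r a) j = 0) :
    ∀ n : ℕ, (M.submatrix r r) ^ n = (M ^ n).submatrix r r := by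
  intro n
  induction n with
  | zero =>
    ext a b
    simp [Matrix.one_apply, hr.eq_iff]
  | succ n ih =>
    rw [pow_succ, ih, pow_succ]
    ext a b
    rw [Matrix.mul_apply, Matrix.submatrix_apply, Matrix.mul_apply]
    simp only [Matrix.submatrix_apply]
    have hz : ∀ x ∈ Finset.univ, x ∉ Finset.univ.image r →
        (M ^ n) (r a) x * M x (r b) = 0 := by
      intro x _ hx
      have hx' : ∀ c, r c ≠ x := fun c hc =>
        hx (Finset.mem_image.mpr ⟨c, Finset.mem_univ c, hc⟩)
      rw [pow_cross_zero M r h1 n a x hx', zero_mul]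
    calc ∑ j : κ, (M ^ n) (r a) (r j) * M (r j) (r b)
        = ∑ x ∈ Finset.univ.image r, (M ^ n) (r a) x * M x (r b) :=
          (Finset.sum_image (f := fun x => (M ^ n) (r a) x * M x (r b)) (g := r)
            (fun x _ y _ h => hr h)).symm
      _ = ∑ x : ι, (M ^ n) (r a) x * M x (r b) :=
          Finset.sum_subset (Finset.subset_univ _) hz

lemma exp_submatrix {ι : Type*} [Fintype ι] [DecidableEq ι] {κ : Type*} [Fintype κ]
    [DecidableEq κ] (M : Matrix ι ι ℝ) (r : κ → ι) (hr : Function.Injective r)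
    (h1 : ∀ a j, (∀ b, r b ≠ j) → M (r a) j = 0) :
    mexp (M.submatrix r r) = (mexp M).submatrix r r := by
  let L : Matrix ι ι ℝ →ₗ[ℝ] Matrix κ κ ℝ :=
    { toFun := fun X => X.submatrix r r
      map_add' := fun X Y => rfl
      map_smul' := fun c X => rfl }
  have hL : Continuous L := LinearMap.continuous_of_finiteDimensional L
  have hsum : Summable fun n : ℕ => ((n.factorial : ℝ)⁻¹) • M ^ n :=
    NormedSpace.expSeries_summable' (𝕂 := ℝ) M
  have key : (mexp M).submatrix r r = ∑' n : ℕ, ((n.factorial : ℝ)⁻¹) • (M ^ n).submatrix r r := by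
    have := hsum.hasSum.map L hL
    rw [mexp, NormedSpace.exp_eq_tsum (𝕂 := ℝ)]
    have heq : ∀ n : ℕ, L (((n.factorial : ℝ)⁻¹) • M ^ n)
        = ((n.factorial : ℝ)⁻¹) • (M ^ n).submatrix r r := fun n => L.map_smul _ _
    calc L (∑' n : ℕ, ((n.factorial : ℝ)⁻¹) • M ^ n)
        = ∑' n : ℕ, L (((n.factorial : ℝ)⁻¹) • M ^ n) := this.tsum_eq.symm
      _ = ∑' n : ℕ, ((n.factorial : ℝ)⁻¹) • (M ^ n).submatrix r r := by
          exact tsum_congr heq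
  rw [key, mexp, NormedSpace.exp_eq_tsum (𝕂 := ℝ)]
  refine tsum_congr fun n => ?_
  rw [pow_submatrix M r hr h1 n]

end ExpSub

section Blocks

variable {p : ℕ}

/-- partner index within a 2×2 block -/
def sigp (p : ℕ) (i : Fin p) : Fin p :=
  if h : i.val / 2 < p / 2 then
    ⟨2 * (i.val / 2) + (1 - i.val % 2), by have := i.isLt; omega⟩
  else i

/-- angle of the block of index `i` -/
def agf (p : ℕ) (Φ : Fin (p / 2) → ℝ) (i : Fin p) : ℝ :=
  if h : i.val / 2 < p / 2 then Φ ⟨i.val / 2, h⟩ else 0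

/-- signed sine entry for index `i` -/
noncomputable def tf (p : ℕ) (Φ : Fin (p / 2) → ℝ) (i : Fin p) : ℝ :=
  if i.val % 2 = 0 then -Real.sin (agf p Φ i) else Real.sin (agf p Φ i)

lemma sigp_val (i : Fin p) (h : i.val / 2 < p / 2) :
    (sigp p i).val = 2 * (i.val / 2) + (1 - i.val % 2) := by
  unfold sigp; rw [dif_pos h]

lemma sigp_id (i : Fin p) (h : ¬ i.val / 2 < p / 2) : sigp p i = i := by
  unfold sigp; rw [dif_neg h]

lemma sigp_sigp (i : Fin p) : sigp p (sigp p i) = i := by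
  by_cases h : i.val / 2 < p / 2
  · have hv := sigp_val i h
    have h2 : (sigp p i).val / 2 < p / 2 := by omega
    have hv2 := sigp_val (sigp p i) h2
    apply Fin.ext; omega
  · rw [sigp_id i h, sigp_id i h]

lemma agf_sigp (Φ : Fin (p / 2) → ℝ) (i : Fin p) : agf p Φ (sigp p i) = agf p Φ i := by
  by_cases h : i.val / 2 < p / 2
  · have hv := sigp_val i h
    have h2 : (sigp p i).val / 2 < p / 2 := by omega
    unfold agf
    rw [dif_pos h2, dif_pos h]
    congr 1
    apply Fin.ext
    simp only []
    omega
  · rw [sigp_id i h]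

lemma agf_zero (Φ : Fin (p / 2) → ℝ) (i : Fin p) (h : ¬ i.val / 2 < p / 2) : agf p Φ i = 0 := by
  unfold agf; rw [dif_neg h]

lemma agf_pos (Φ : Fin (p / 2) → ℝ) (i : Fin p) (h : i.val / 2 < p / 2) :
    agf p Φ i = Φ ⟨i.val / 2, h⟩ := by
  unfold agf; rw [dif_pos h]

lemma tf_zero (Φ : Fin (p / 2) → ℝ) (i : Fin p) (h : ¬ i.val / 2 < p / 2) : tf p Φ i = 0 := by
  unfold tf; rw [agf_zero Φ i h]; simp

lemma tf_sigp (Φ : Fin (p / 2) → ℝ) (i : Fin p) : tf p Φ (sigp p i) = -tf p Φ i := by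
  by_cases h : i.val / 2 < p / 2
  · have hv := sigp_val i h
    have hm : (sigp p i).val % 2 = 1 - i.val % 2 := by omega
    unfold tf
    rw [agf_sigp]
    rcases Nat.mod_two_eq_zero_or_one i.val with hi | hi
    · rw [if_pos hi, if_neg (show ¬ (sigp p i).val % 2 = 0 by omega), neg_neg]
    · rw [if_neg (show ¬ i.val % 2 = 0 by omega),
        if_pos (show (sigp p i).val % 2 = 0 by omega)]
  · rw [sigp_id i h, tf_zero Φ i h, neg_zero]

lemma Gmat_apply_block (Φ : Fin (p / 2) → ℝ) (i j : Fin p) (h1 : i.val / 2 = j.val / 2)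
    (h2 : i.val / 2 < p / 2) (θ : ℝ) (hθ : Φ ⟨i.val / 2, h2⟩ = θ) :
    Gmat p Φ i j = if i.val % 2 = 0 then (if j.val % 2 = 0 then Real.cos θ else -Real.sin θ)
      else (if j.val % 2 = 0 then Real.sin θ else Real.cos θ) := by
  unfold Gmat
  rw [Matrix.of_apply, dif_pos ⟨h1, h2⟩, hθ]

lemma Gmat_apply_off (Φ : Fin (p / 2) → ℝ) (i j : Fin p)
    (h : ¬ (i.val / 2 = j.val / 2 ∧ i.val / 2 < p / 2)) :
    Gmat p Φ i j = if i = j then 1 else 0 := by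
  unfold Gmat
  rw [Matrix.of_apply, dif_neg h]

lemma Gmat_eq (Φ : Fin (p / 2) → ℝ) (i j : Fin p) :
    Gmat p Φ i j = (if i = j then Real.cos (agf p Φ j) else 0) +
      (if i = sigp p j then -(tf p Φ j) else 0) := by
  by_cases hb : i.val / 2 = j.val / 2 ∧ i.val / 2 < p / 2
  · have hj2 : j.val / 2 < p / 2 := hb.1 ▸ hb.2
    have hsv := sigp_val j hj2
    have hagf : agf p Φ j = Φ ⟨i.val / 2, hb.2⟩ := by
      unfold agf; rw [dif_pos hj2]; congr 1; exact Fin.ext hb.1.symm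
    rw [Gmat_apply_block Φ i j hb.1 hb.2 (agf p Φ j) hagf.symm]
    rcases Nat.mod_two_eq_zero_or_one i.val with hi | hi <;>
      rcases Nat.mod_two_eq_zero_or_one j.val with hj | hj
    · have hij : i = j := Fin.ext (by omega)
      have hns : ¬ i = sigp p j := fun hh => by
        have := congrArg Fin.val hh; omega
      rw [if_pos hi, if_pos hj, if_pos hij, if_neg hns, add_zero]
    · have hij : ¬ i = j := fun hh => by have := congrArg Fin.val hh; omega
      have hs : i = sigp p j := Fin.ext (by omega)
      rw [if_pos hi, if_neg (by omega : ¬ j.val % 2 = 0), if_neg hij, if_pos hs, zero_add]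
      unfold tf
      rw [if_neg (by omega : ¬ j.val % 2 = 0)]
    · have hij : ¬ i = j := fun hh => by have := congrArg Fin.val hh; omega
      have hs : i = sigp p j := Fin.ext (by omega)
      rw [if_neg (by omega : ¬ i.val % 2 = 0), if_pos hj, if_neg hij, if_pos hs, zero_add]
      unfold tf
      rw [if_pos hj, neg_neg]
    · have hij : i = j := Fin.ext (by omega)
      have hns : ¬ i = sigp p j := fun hh => by
        have := congrArg Fin.val hh; omega
      rw [if_neg (by omega : ¬ i.val % 2 = 0), if_neg (by omega : ¬ j.val % 2 = 0),
        if_pos hij, if_neg hns, add_zero]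
  · rw [Gmat_apply_off Φ i j hb]
    by_cases hij : i = j
    · subst hij
      have hj2 : ¬ i.val / 2 < p / 2 := fun hh => hb ⟨rfl, hh⟩
      rw [if_pos rfl, if_pos rfl, agf_zero Φ i hj2, tf_zero Φ i hj2, if_pos (sigp_id i hj2).symm]
      simp
    · rw [if_neg hij, if_neg hij]
      by_cases hj2 : j.val / 2 < p / 2
      · have hsv := sigp_val j hj2
        have hns : ¬ i = sigp p j := fun hh => by
          have hv := congrArg Fin.val hh
          exact hb ⟨by omega, by omega⟩
        rw [if_neg hns, add_zero]
      · rw [if_neg (fun hh => hij (hh.trans (sigp_id j hj2))), add_zero]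

end Blocks

section Pick

/-- select the rows/columns of the 2×2 blocks enumerated by `e` -/
def pick (p k : ℕ) (e : Fin k → Fin (p / 2)) : Fin (2 * k) → Fin p :=
  fun a => ⟨2 * (e ⟨a.val / 2, by have := a.isLt; omega⟩).val + a.val % 2, by
    have := (e ⟨a.val / 2, by have := a.isLt; omega⟩).isLt; have := a.isLt; omega⟩

variable {p k : ℕ} {e : Fin k → Fin (p / 2)}

lemma pick_val (a : Fin (2 * k)) (h : a.val / 2 < k) :
    (pick p k e a).val = 2 * (e ⟨a.val / 2, h⟩).val + a.val % 2 := rfl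

lemma pick_div (a : Fin (2 * k)) (h : a.val / 2 < k) :
    (pick p k e a).val / 2 = (e ⟨a.val / 2, h⟩).val := by
  rw [pick_val a h]; omega

lemma pick_mod (a : Fin (2 * k)) (h : a.val / 2 < k) :
    (pick p k e a).val % 2 = a.val % 2 := by
  rw [pick_val a h]; omega

lemma pick_lt (a : Fin (2 * k)) (h : a.val / 2 < k) :
    (pick p k e a).val / 2 < p / 2 := by
  rw [pick_div a h]; exact (e ⟨a.val / 2, h⟩).isLt

lemma pick_inj (he : Function.Injective e) : Function.Injective (pick p k e) := by
  intro a b hab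
  have ha : a.val / 2 < k := by have := a.isLt; omega
  have hb : b.val / 2 < k := by have := b.isLt; omega
  have hv := congrArg Fin.val hab
  rw [pick_val a ha, pick_val b hb] at hv
  have hm : a.val % 2 = b.val % 2 := by omega
  have hval : (e ⟨a.val / 2, ha⟩).val = (e ⟨b.val / 2, hb⟩).val := by omega
  have hdd : (⟨a.val / 2, ha⟩ : Fin k) = ⟨b.val / 2, hb⟩ := he (Fin.ext hval)
  have : a.val / 2 = b.val / 2 := congrArg Fin.val hdd
  exact Fin.ext (by omega)

lemma pick_not_range (j : Fin p) (hj : ∀ b, pick p k e b ≠ j) (h2 : j.val / 2 < p / 2) :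
    ∀ u, e u ≠ ⟨j.val / 2, h2⟩ := by
  intro u hu
  have hub := u.isLt
  have hblt : 2 * u.val + j.val % 2 < 2 * k := by omega
  apply hj ⟨2 * u.val + j.val % 2, hblt⟩
  have hdiv : (⟨2 * u.val + j.val % 2, hblt⟩ : Fin (2 * k)).val / 2 < k := by
    simp only []; omega
  apply Fin.ext
  rw [pick_val _ hdiv]
  have hidx : (⟨(⟨2 * u.val + j.val % 2, hblt⟩ : Fin (2 * k)).val / 2, hdiv⟩ : Fin k) = u :=
    Fin.ext (by simp only []; omega)
  rw [hidx, hu]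
  simp only []
  omega

lemma agf_pick (Φ : Fin (p / 2) → ℝ) (ψ : ℝ) (hval : ∀ u, Φ (e u) = ψ) (a : Fin (2 * k)) :
    agf p Φ (pick p k e a) = ψ := by
  have ha : a.val / 2 < k := by have := a.isLt; omega
  have hlt := pick_lt (e := e) a ha
  rw [agf_pos Φ _ hlt]
  have hmk : (⟨(pick p k e a).val / 2, hlt⟩ : Fin (p / 2)) = e ⟨a.val / 2, ha⟩ :=
    Fin.ext (pick_div a ha)
  rw [hmk, hval]

lemma Gmat_pick (Φ : Fin (p / 2) → ℝ) (ψ : ℝ) (he : Function.Injective e)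
    (hval : ∀ u, Φ (e u) = ψ) :
    (Gmat p Φ).submatrix (pick p k e) (pick p k e) = Gmat (2 * k) (fun _ => ψ) := by
  ext a b
  rw [Matrix.submatrix_apply]
  have ha : a.val / 2 < k := by have := a.isLt; omega
  have hb : b.val / 2 < k := by have := b.isLt; omega
  by_cases hdd : a.val / 2 = b.val / 2
  · have hee : (pick p k e a).val / 2 = (pick p k e b).val / 2 := by
      rw [pick_div a ha, pick_div b hb]
      congr 2
      exact Fin.ext hdd
    have hlt := pick_lt (e := e) a ha
    have hθ : Φ ⟨(pick p k e a).val / 2, hlt⟩ = ψ := by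
      have : (⟨(pick p k e a).val / 2, hlt⟩ : Fin (p / 2)) = e ⟨a.val / 2, ha⟩ :=
        Fin.ext (pick_div a ha)
      rw [this, hval]
    have halt : a.val / 2 < 2 * k / 2 := by omega
    rw [Gmat_apply_block Φ _ _ hee hlt ψ hθ,
      Gmat_apply_block (fun _ => ψ) a b hdd halt ψ rfl,
      pick_mod a ha, pick_mod b hb]
  · have hne : (pick p k e a).val / 2 ≠ (pick p k e b).val / 2 := by
      rw [pick_div a ha, pick_div b hb]
      intro hh
      exact hdd (congrArg Fin.val (he (Fin.ext hh) : (⟨a.val / 2, ha⟩ : Fin k) = ⟨b.val / 2, hb⟩))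
    have hab : a ≠ b := fun hh => hdd (by rw [hh])
    rw [Gmat_apply_off Φ _ _ (fun hh => hne hh.1),
      Gmat_apply_off (fun _ => ψ) a b (fun hh => hdd hh.1),
      if_neg (fun hh => hab (pick_inj he hh)), if_neg hab]

end Pick

/-- Structure reduction for geodesic loops. -/
theorem reduced_geodesic_loop (β : ℝ) (hβ : 0 < β) (p : ℕ) (hp : 2 ≤ p)
    (A B : Matrix (Fin p) (Fin p) ℝ) (hA : Aᵀ = -A)
    (Φ₁ Φ₂ : Fin (p / 2) → ℝ)
    (hΦ₁0 : ∀ i, 0 ≤ Φ₁ i) (hΦ₁π : ∀ i, Φ₁ i ≤ Real.pi)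
    (hΦ₂0 : ∀ i, 0 ≤ Φ₂ i) (hΦ₂π : ∀ i, Φ₂ i ≤ Real.pi)
    (hexpX : mexp (Matrix.fromBlocks ((2 * β) • A) (-Bᵀ) B 0) =
      Matrix.fromBlocks (Gmat p Φ₁) 0 0 (Gmat p Φ₂))
    (hexpA : mexp ((1 - 2 * β) • A) = Gmat p (fun i => -(Φ₁ i)))
    (φ : ℝ) (hφ : φ ≠ 0) (s₁ s₂ : ℕ)
    (hs₁ : s₁ = {i : Fin (p / 2) | Φ₁ i = φ}.ncard)
    (hs₂ : s₂ = {i : Fin (p / 2) | Φ₂ i = φ}.ncard)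
    (hs₁pos : 1 ≤ s₁) :
    ∃ (r : Fin (2 * s₁) → Fin p) (r₂ : Fin (2 * s₂) → Fin p),
      Function.Injective r ∧ Function.Injective r₂ ∧
      mexp (Matrix.fromBlocks ((2 * β) • A.submatrix r r) (-(B.submatrix r₂ r)ᵀ)
          (B.submatrix r₂ r) 0) =
        Matrix.fromBlocks (Gmat (2 * s₁) (fun _ => φ)) 0 0 (Gmat (2 * s₂) (fun _ => φ)) ∧
      mexp ((1 - 2 * β) • A.submatrix r r) = Gmat (2 * s₁) (fun _ => -φ) := by
  classical
  -- enumerations of the φ-blocks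
  set F₁ : Finset (Fin (p / 2)) := Finset.univ.filter (fun u => Φ₁ u = φ) with hF₁def
  set F₂ : Finset (Fin (p / 2)) := Finset.univ.filter (fun u => Φ₂ u = φ) with hF₂def
  have hcard₁ : F₁.card = s₁ := by
    rw [hs₁]
    have : {i : Fin (p / 2) | Φ₁ i = φ} = (F₁ : Set (Fin (p / 2))) := by
      ext u; simp [hF₁def]
    rw [this, Set.ncard_coe_finset]
  have hcard₂ : F₂.card = s₂ := by
    rw [hs₂]
    have : {i : Fin (p / 2) | Φ₂ i = φ} = (F₂ : Set (Fin (p / 2))) := by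
      ext u; simp [hF₂def]
    rw [this, Set.ncard_coe_finset]
  set e₁ : Fin s₁ → Fin (p / 2) := fun u => F₁.orderEmbOfFin hcard₁ u with he₁def
  set e₂ : Fin s₂ → Fin (p / 2) := fun u => F₂.orderEmbOfFin hcard₂ u with he₂def
  have he₁ : Function.Injective e₁ := fun a b h => (F₁.orderEmbOfFin hcard₁).injective h
  have he₂ : Function.Injective e₂ := fun a b h => (F₂.orderEmbOfFin hcard₂).injective h
  have he₁mem : ∀ u, Φ₁ (e₁ u) = φ := by
    intro u
    have h := F₁.orderEmbOfFin_mem hcard₁ u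
    exact (Finset.mem_filter.mp h).2
  have he₂mem : ∀ u, Φ₂ (e₂ u) = φ := by
    intro u
    have h := F₂.orderEmbOfFin_mem hcard₂ u
    exact (Finset.mem_filter.mp h).2
  set r : Fin (2 * s₁) → Fin p := pick p s₁ e₁ with hrdef
  set r₂ : Fin (2 * s₂) → Fin p := pick p s₂ e₂ with hr₂def
  have hrinj : Function.Injective r := pick_inj he₁
  have hr₂inj : Function.Injective r₂ := pick_inj he₂
  -- basic facts about φ
  obtain ⟨u₀, hu₀⟩ : ∃ u, Φ₁ u = φ := by
    have : F₁.Nonempty := Finset.card_pos.mp (by omega)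
    obtain ⟨u, hu⟩ := this
    exact ⟨u, (Finset.mem_filter.mp hu).2⟩
  have hφ0 : 0 ≤ φ := hu₀ ▸ hΦ₁0 u₀
  have hφπ : φ ≤ Real.pi := hu₀ ▸ hΦ₁π u₀
  have hcosne : ∀ θ : ℝ, 0 ≤ θ → θ ≤ Real.pi → θ ≠ φ → Real.cos θ ≠ Real.cos φ := by
    intro θ h0 hπ hne h
    exact hne (Real.injOn_cos ⟨h0, hπ⟩ ⟨hφ0, hφπ⟩ h)
  -- the big matrices
  set Mbig : Matrix (Fin p ⊕ Fin p) (Fin p ⊕ Fin p) ℝ :=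
    Matrix.fromBlocks ((2 * β) • A) (-Bᵀ) B 0 with hMbigdef
  set D : Matrix (Fin p ⊕ Fin p) (Fin p ⊕ Fin p) ℝ :=
    Matrix.fromBlocks (Gmat p Φ₁) 0 0 (Gmat p Φ₂) with hDdef
  have hcomm : Mbig * D = D * Mbig := by
    have hcommute : Commute Mbig (NormedSpace.exp Mbig) := (Commute.refl Mbig).exp_right
    have hexpX' : NormedSpace.exp Mbig = D := hexpX
    rw [hexpX'] at hcommute
    exact hcommute
  -- block-rotation structure of D
  set σc : Fin p ⊕ Fin p → Fin p ⊕ Fin p := Sum.map (sigp p) (sigp p) with hσcdef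
  set cc : Fin p ⊕ Fin p → ℝ :=
    Sum.elim (fun i => Real.cos (agf p Φ₁ i)) (fun i => Real.cos (agf p Φ₂ i)) with hccdef
  set tc : Fin p ⊕ Fin p → ℝ := Sum.elim (tf p Φ₁) (tf p Φ₂) with htcdef
  have hσσ : ∀ i, σc (σc i) = i := by
    intro i; cases i <;> simp [hσcdef, sigp_sigp]
  have hccσ : ∀ i, cc (σc i) = cc i := by
    intro i; cases i <;> simp [hσcdef, hccdef, agf_sigp]
  have htcσ : ∀ i, tc (σc i) = -tc i := by
    intro i; cases i <;> simp [hσcdef, htcdef, tf_sigp]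
  have hGD : ∀ i j, D i j = (if i = j then cc j else 0) + (if i = σc j then -tc j else 0) := by
    intro i j
    cases i with
    | inl a =>
      cases j with
      | inl b =>
        rw [hDdef]
        rw [Matrix.fromBlocks_apply₁₁, Gmat_eq]
        simp [hσcdef, hccdef, htcdef]
      | inr b =>
        rw [hDdef]
        rw [Matrix.fromBlocks_apply₁₂]
        simp [hσcdef]
    | inr a =>
      cases j with
      | inl b =>
        rw [hDdef]
        rw [Matrix.fromBlocks_apply₂₁]
        simp [hσcdef]
      | inr b =>
        rw [hDdef]
        rw [Matrix.fromBlocks_apply₂₂, Gmat_eq]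
        simp [hσcdef, hccdef, htcdef]
  have hcross : ∀ i j, cc i ≠ cc j → Mbig i j = 0 := by
    intro i j hij
    exact cross_zero Mbig D σc cc tc hσσ hccσ htcσ hGD hcomm hij
  -- cos values on selected and unselected indices
  set ρ : Fin (2 * s₁) ⊕ Fin (2 * s₂) → Fin p ⊕ Fin p := Sum.map r r₂ with hρdef
  have hρinj : Function.Injective ρ := hrinj.sumMap hr₂inj
  have hcsel : ∀ a, cc (ρ a) = Real.cos φ := by
    intro a
    cases a with
    | inl a => simp [hρdef, hccdef, hrdef, agf_pick Φ₁ φ he₁mem a]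
    | inr a => simp [hρdef, hccdef, hr₂def, agf_pick Φ₂ φ he₂mem a]
  have hcnot₁ : ∀ jl : Fin p, (∀ b, r b ≠ jl) → Real.cos (agf p Φ₁ jl) ≠ Real.cos φ := by
    intro jl hjl
    by_cases h2 : jl.val / 2 < p / 2
    · rw [agf_pos Φ₁ jl h2]
      refine hcosne _ (hΦ₁0 _) (hΦ₁π _) ?_
      intro hval
      have hmem : (⟨jl.val / 2, h2⟩ : Fin (p / 2)) ∈ F₁ :=
        Finset.mem_filter.mpr ⟨Finset.mem_univ _, hval⟩
      have : (⟨jl.val / 2, h2⟩ : Fin (p / 2)) ∈ Set.range (F₁.orderEmbOfFin hcard₁) := by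
        rw [Finset.range_orderEmbOfFin]
        exact hmem
      obtain ⟨u, hu⟩ := this
      exact pick_not_range jl hjl h2 u hu
    · rw [agf_zero Φ₁ jl h2]
      exact hcosne 0 le_rfl Real.pi_pos.le (Ne.symm hφ)
  have hcnot₂ : ∀ jr : Fin p, (∀ b, r₂ b ≠ jr) → Real.cos (agf p Φ₂ jr) ≠ Real.cos φ := by
    intro jr hjr
    by_cases h2 : jr.val / 2 < p / 2
    · rw [agf_pos Φ₂ jr h2]
      refine hcosne _ (hΦ₂0 _) (hΦ₂π _) ?_
      intro hval
      have hmem : (⟨jr.val / 2, h2⟩ : Fin (p / 2)) ∈ F₂ :=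
        Finset.mem_filter.mpr ⟨Finset.mem_univ _, hval⟩
      have : (⟨jr.val / 2, h2⟩ : Fin (p / 2)) ∈ Set.range (F₂.orderEmbOfFin hcard₂) := by
        rw [Finset.range_orderEmbOfFin]
        exact hmem
      obtain ⟨u, hu⟩ := this
      exact pick_not_range jr hjr h2 u hu
    · rw [agf_zero Φ₂ jr h2]
      exact hcosne 0 le_rfl Real.pi_pos.le (Ne.symm hφ)
  have hcnot : ∀ j : Fin p ⊕ Fin p, (∀ b, ρ b ≠ j) → cc j ≠ Real.cos φ := by
    intro j hj
    cases j with
    | inl jl =>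
      have hjl : ∀ b, r b ≠ jl := by
        intro b hb
        exact hj (Sum.inl b) (by simp [hρdef, hb])
      simpa [hccdef] using hcnot₁ jl hjl
    | inr jr =>
      have hjr : ∀ b, r₂ b ≠ jr := by
        intro b hb
        exact hj (Sum.inr b) (by simp [hρdef, hb])
      simpa [hccdef] using hcnot₂ jr hjr
  have hMcross : ∀ a j, (∀ b, ρ b ≠ j) → Mbig (ρ a) j = 0 := by
    intro a j hj
    refine hcross (ρ a) j ?_
    rw [hcsel a]
    exact fun h => hcnot j hj h.symm
  -- first conclusion
  have hsub1 : mexp (Mbig.submatrix ρ ρ) = (mexp Mbig).submatrix ρ ρ :=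
    exp_submatrix Mbig ρ hρinj hMcross
  have hMsub : Mbig.submatrix ρ ρ =
      Matrix.fromBlocks ((2 * β) • A.submatrix r r) (-(B.submatrix r₂ r)ᵀ)
        (B.submatrix r₂ r) 0 := by
    ext i j
    cases i with
    | inl a =>
      cases j with
      | inl b => simp [hρdef, hMbigdef, Matrix.submatrix_apply]
      | inr b => simp [hρdef, hMbigdef, Matrix.submatrix_apply]
    | inr a =>
      cases j with
      | inl b => simp [hρdef, hMbigdef, Matrix.submatrix_apply]
      | inr b => simp [hρdef, hMbigdef, Matrix.submatrix_apply]
  have hDsub : D.submatrix ρ ρ =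
      Matrix.fromBlocks (Gmat (2 * s₁) (fun _ => φ)) 0 0 (Gmat (2 * s₂) (fun _ => φ)) := by
    have hg₁ := Gmat_pick (e := e₁) Φ₁ φ he₁ he₁mem
    have hg₂ := Gmat_pick (e := e₂) Φ₂ φ he₂ he₂mem
    ext i j
    cases i with
    | inl a =>
      cases j with
      | inl b =>
        have := congrFun (congrFun hg₁ a) b
        simpa [hρdef, hDdef, hrdef, Matrix.submatrix_apply] using this
      | inr b => simp [hρdef, hDdef, Matrix.submatrix_apply]
    | inr a =>
      cases j with
      | inl b => simp [hρdef, hDdef, Matrix.submatrix_apply]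
      | inr b =>
        have := congrFun (congrFun hg₂ a) b
        simpa [hρdef, hDdef, hr₂def, Matrix.submatrix_apply] using this
  have heq1 : mexp (Matrix.fromBlocks ((2 * β) • A.submatrix r r) (-(B.submatrix r₂ r)ᵀ)
      (B.submatrix r₂ r) 0) =
      Matrix.fromBlocks (Gmat (2 * s₁) (fun _ => φ)) 0 0 (Gmat (2 * s₂) (fun _ => φ)) := by
    rw [← hMsub, hsub1, hexpX, hDsub]
  -- second conclusion
  have hAcross : ∀ a j, (∀ b, r b ≠ j) → ((1 - 2 * β) • A) (r a) j = 0 := by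
    intro a j hj
    have hjρ : ∀ b, ρ b ≠ Sum.inl j := by
      intro b hb
      cases b with
      | inl b =>
        simp only [hρdef, Sum.map_inl, Sum.inl.injEq] at hb
        exact hj b hb
      | inr b => simp [hρdef] at hb
    have h0 : Mbig (ρ (Sum.inl a)) (Sum.inl j) = 0 := hMcross (Sum.inl a) (Sum.inl j) hjρ
    have h0' : (2 * β) * A (r a) j = 0 := by
      simpa [hρdef, hMbigdef] using h0
    have hA0 : A (r a) j = 0 := by
      rcases mul_eq_zero.mp h0' with h | h
      · exfalso; nlinarith
      · exact h
    simp [Matrix.smul_apply, hA0]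
  have hsub2 : mexp (((1 - 2 * β) • A).submatrix r r) =
      (mexp ((1 - 2 * β) • A)).submatrix r r :=
    exp_submatrix ((1 - 2 * β) • A) r hrinj hAcross
  have heq2 : mexp ((1 - 2 * β) • A.submatrix r r) = Gmat (2 * s₁) (fun _ => -φ) := by
    have hsm : ((1 - 2 * β) • A).submatrix r r = (1 - 2 * β) • A.submatrix r r := by
      ext i j; simp [Matrix.submatrix_apply, Matrix.smul_apply]
    have hg := Gmat_pick (e := e₁) (fun i => -(Φ₁ i)) (-φ)
      he₁ (fun u => by show -(Φ₁ (e₁ u)) = -φ; rw [he₁mem u])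
    rw [← hsm, hsub2, hexpA, hrdef, hg]
  exact ⟨r, r₂, hrinj, hr₂inj, heq1, heq2⟩
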